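/- arXiv:1104.4585 — 3 statements merged into one kernel-verified Lean document; each statement's English description precedes it below -/
import Mathlib

section
/- For every n ≥ 1, the reduction map Dₙ → D₁ induces a group isomorphism from the cokernel Dₙ^×/φₙ(Eₙ^×) onto the cokernel D₁^×/φ₁(E₁^×). -/
open LaurentPolynomial

set_option maxHeartbeats 1000000
set_option synthInstance.maxHeartbeats 400000

noncomputable section

/-- `Λ = ℚ[t,t⁻¹]`, the ring of Laurent polynomials over `ℚ`. -/
abbrev Λ : Type := LaurentPolynomial ℚ

/-- The variable `t` of `Λ`. -/
def tΛ : Λ := T 1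

/-- The involution `P(t) ↦ P(t⁻¹)` of `Λ`. -/
def lbar : Λ →+* Λ := (invert : Λ ≃ₐ[ℚ] Λ).toRingEquiv.toRingHom

/-- `P ∈ Λ` is symmetric if `P(t⁻¹) = P(t)`. -/
def SymmL (P : Λ) : Prop := lbar P = P

/-- The fraction field `ℚ(t)` of `Λ`. -/
abbrev KΛ : Type := FractionRing Λ

/-- The involution of `ℚ(t)` extending that of `Λ`. -/
def kbar : KΛ →+* KΛ :=
  (IsFractionRing.ringEquivOfRingEquiv (A := Λ) (B := Λ) (K := KΛ) (L := KΛ)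
    (invert : Λ ≃ₐ[ℚ] Λ).toRingEquiv).toRingHom

lemma kbar_algebraMap (P : Λ) : kbar (algebraMap Λ KΛ P) = algebraMap Λ KΛ (lbar P) := by
  simp [kbar, lbar]

/-- The image of `Λ` inside `ℚ(t)`, as a `Λ`-submodule of `ℚ(t)`. -/
def ΛinK : Submodule Λ KΛ := LinearMap.range (Algebra.linearMap Λ KΛ)

/-- The quotient `Λ`-module `ℚ(t)/Λ`. -/
abbrev QL : Type := KΛ ⧸ ΛinK

/-- The class in `ℚ(t)/Λ` of an element of `ℚ(t)`. -/
abbrev QLmk : KΛ →ₗ[Λ] QL := ΛinK.mkQ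

/-- The class of the fraction `P/Q` in `ℚ(t)/Λ`, for `P Q : Λ`. -/
def fracQ (P Q : Λ) : QL := QLmk (algebraMap Λ KΛ P / algebraMap Λ KΛ Q)

/-- The involution of `ℚ(t)/Λ` induced by `P(t) ↦ P(t⁻¹)`. -/
def qbar : QL → QL := fun x =>
  Quotient.liftOn x (fun a => QLmk (kbar a)) (by
    intro a b h
    obtain ⟨r, hr⟩ := (Submodule.quotientRel_def (p := ΛinK)).mp h
    apply (Submodule.Quotient.eq _).2
    refine ⟨lbar r, ?_⟩
    rw [← map_sub, ← hr]
    exact (kbar_algebraMap _).symm)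

lemma qbar_mk (a : KΛ) : qbar (QLmk a) = QLmk (kbar a) := rfl

/-- Evaluation of a Laurent polynomial at a nonzero rational number. -/
def evalL (q : ℚˣ) : Λ →ₐ[ℚ] ℚ :=
  AddMonoidAlgebra.lift ℚ ℚ ℤ ((Units.coeHom ℚ).comp (zpowersHom ℚˣ q))

/-- A hermitian form on a `Λ`-module `A`, with values in `ℚ(t)/Λ`:
it is `Λ`-linear in the first variable and conjugate-symmetric (hence
semilinear with respect to the involution in the second variable). -/
structure HermForm (A : Type*) [AddCommGroup A] [Module Λ A] where
  bil : A → A → QL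
  add_left : ∀ x y z : A, bil (x + y) z = bil x z + bil y z
  smul_left : ∀ (r : Λ) (x y : A), bil (r • x) y = r • bil x y
  conj_symm : ∀ x y : A, bil x y = qbar (bil y x)

/-- A hermitian form is non-degenerate if `φ(x,y) = 0` for all `y` implies `x = 0`. -/
def HermForm.Nondeg {A : Type*} [AddCommGroup A] [Module Λ A] (φ : HermForm A) : Prop :=
  ∀ x : A, (∀ y : A, φ.bil x y = 0) → x = 0

/-- Two hermitian forms are isometric if they differ by a `Λ`-module automorphism. -/
def HermForm.Isometric {A : Type*} [AddCommGroup A] [Module Λ A]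
    (φ₁ φ₂ : HermForm A) : Prop :=
  ∃ f : A ≃ₗ[Λ] A, ∀ x y : A, φ₂.bil x y = φ₁.bil (f x) (f y)

/-- The `ℚ`-algebra map `ℚ[s] → Λ` sending `s` to `t + t⁻¹`. -/
def θQ : Polynomial ℚ →ₐ[ℚ] Λ := Polynomial.aeval (T 1 + T (-1))

/-- `Eₙ = Λ/(Δⁿ)`. -/
abbrev En (Δ : Λ) (n : ℕ) : Type := Λ ⧸ (Ideal.span {Δ ^ n} : Ideal Λ)

/-- `Dₙ = ℚ[s]/(Δ_sⁿ)`. -/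
abbrev Dn (Δs : Polynomial ℚ) (n : ℕ) : Type :=
  Polynomial ℚ ⧸ (Ideal.span {Δs ^ n} : Ideal (Polynomial ℚ))

/-- The ring homomorphism `Dₙ → Eₙ` induced by `s ↦ t + t⁻¹`. -/
def ιDE (Δ : Λ) (Δs : Polynomial ℚ) (hθ : θQ Δs = Δ) (n : ℕ) : Dn Δs n →+* En Δ n :=
  Ideal.quotientMap (Ideal.span {Δ ^ n}) θQ.toRingHom (by
    rw [Ideal.span_le, Set.singleton_subset_iff, SetLike.mem_coe, Ideal.mem_comap]
    have : θQ.toRingHom (Δs ^ n) = Δ ^ n := by rw [map_pow]; exact congrArg (· ^ n) hθ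
    rw [this]
    exact Ideal.subset_span rfl)

/-- The involution of `Eₙ` induced by that of `Λ` (using that `Δ` is symmetric). -/
def barE (Δ : Λ) (hsym : lbar Δ = Δ) (n : ℕ) : En Δ n →+* En Δ n :=
  Ideal.quotientMap (Ideal.span {Δ ^ n}) lbar (by
    rw [Ideal.span_le, Set.singleton_subset_iff, SetLike.mem_coe, Ideal.mem_comap]
    have : lbar (Δ ^ n) = Δ ^ n := by rw [map_pow, hsym]
    rw [this]
    exact Ideal.subset_span rfl)

/-- The image of `φₙ : Eₙˣ → Dₙˣ`, i.e. the subgroup of `Dₙˣ` of elements `d` such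
that the image of `d` in `Eₙ` is of the form `R·R̄` for a unit `R` of `Eₙ`. -/
def normSub (Δ : Λ) (Δs : Polynomial ℚ) (hθ : θQ Δs = Δ) (hsym : lbar Δ = Δ) (n : ℕ) :
    Subgroup (Dn Δs n)ˣ where
  carrier := {d : (Dn Δs n)ˣ | ∃ R : (En Δ n)ˣ,
    ιDE Δ Δs hθ n (d : Dn Δs n) = (R : En Δ n) * barE Δ hsym n (R : En Δ n)}
  one_mem' := ⟨1, by simp⟩
  mul_mem' := by
    rintro a b ⟨R, hR⟩ ⟨S, hS⟩
    refine ⟨R * S, ?_⟩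
    rw [Units.val_mul, map_mul, hR, hS, Units.val_mul, map_mul]
    ring
  inv_mem' := by
    rintro a ⟨R, hR⟩
    refine ⟨R⁻¹, ?_⟩
    have hxu : ιDE Δ Δs hθ n ((a⁻¹ : (Dn Δs n)ˣ) : Dn Δs n)
        * ((R : En Δ n) * barE Δ hsym n (R : En Δ n)) = 1 := by
      rw [← hR, ← map_mul, ← Units.val_mul, inv_mul_cancel, Units.val_one, map_one]
    have h1 : ((R⁻¹ : (En Δ n)ˣ) : En Δ n) * (R : En Δ n) = 1 := by
      rw [← Units.val_mul, inv_mul_cancel, Units.val_one]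
    have hyu : (((R⁻¹ : (En Δ n)ˣ) : En Δ n) * barE Δ hsym n ((R⁻¹ : (En Δ n)ˣ) : En Δ n))
        * ((R : En Δ n) * barE Δ hsym n (R : En Δ n)) = 1 := by
      calc (((R⁻¹ : (En Δ n)ˣ) : En Δ n) * barE Δ hsym n ((R⁻¹ : (En Δ n)ˣ) : En Δ n))
            * ((R : En Δ n) * barE Δ hsym n (R : En Δ n))
          = (((R⁻¹ : (En Δ n)ˣ) : En Δ n) * (R : En Δ n))
            * (barE Δ hsym n ((R⁻¹ : (En Δ n)ˣ) : En Δ n) * barE Δ hsym n (R : En Δ n)) := by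
            ring
        _ = 1 := by rw [h1, ← map_mul, h1, map_one, one_mul]
    calc ιDE Δ Δs hθ n ((a⁻¹ : (Dn Δs n)ˣ) : Dn Δs n)
        = ιDE Δ Δs hθ n ((a⁻¹ : (Dn Δs n)ˣ) : Dn Δs n)
          * (((R : En Δ n) * barE Δ hsym n (R : En Δ n))
          * (((R⁻¹ : (En Δ n)ˣ) : En Δ n) * barE Δ hsym n ((R⁻¹ : (En Δ n)ˣ) : En Δ n))) := by
          rw [show ((R : En Δ n) * barE Δ hsym n (R : En Δ n))
            * (((R⁻¹ : (En Δ n)ˣ) : En Δ n) * barE Δ hsym n ((R⁻¹ : (En Δ n)ˣ) : En Δ n)) = 1 by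
              rw [mul_comm]; exact hyu]
          rw [mul_one]
      _ = (ιDE Δ Δs hθ n ((a⁻¹ : (Dn Δs n)ˣ) : Dn Δs n)
          * ((R : En Δ n) * barE Δ hsym n (R : En Δ n)))
          * (((R⁻¹ : (En Δ n)ˣ) : En Δ n) * barE Δ hsym n ((R⁻¹ : (En Δ n)ˣ) : En Δ n)) := by
          ring
      _ = ((R⁻¹ : (En Δ n)ˣ) : En Δ n) * barE Δ hsym n ((R⁻¹ : (En Δ n)ˣ) : En Δ n) := by
          rw [hxu, one_mul]

instance normSub_normal (Δ : Λ) (Δs : Polynomial ℚ) (hθ : θQ Δs = Δ) (hsym : lbar Δ = Δ)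
    (n : ℕ) : (normSub Δ Δs hθ hsym n).Normal :=
  haveI : IsMulCommutative (Dn Δs n)ˣ := 
    ⟨⟨fun a b => Units.ext (by rw [Units.val_mul, Units.val_mul, mul_comm])⟩⟩
  Subgroup.normal_of_isMulCommutative (G := (Dn Δs n)ˣ) _

/-- The reduction map `Dₙ → D₁`. -/
def redD (Δs : Polynomial ℚ) (n : ℕ) (hn : 1 ≤ n) : Dn Δs n →+* Dn Δs 1 :=
  Ideal.Quotient.factor (by
    rw [Ideal.span_le, Set.singleton_subset_iff, SetLike.mem_coe, Ideal.mem_span_singleton,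
      pow_one]
    exact dvd_pow_self Δs (by omega))


/-! ### Auxiliary lemmas -/

lemma lbar_T' (n : ℤ) : lbar (T n : Λ) = T (-n) := invert_T n

lemma lbar_lbar (P : Λ) : lbar (lbar P) = P := by
  induction P using LaurentPolynomial.induction_on' with
  | add p q hp hq => simp only [map_add, hp, hq]
  | C_mul_T n a => simp [lbar, map_mul]

lemma lbar_theta (p : Polynomial ℚ) : lbar (θQ p) = θQ p := by
  have h := Polynomial.aeval_algHom ((invert : Λ ≃ₐ[ℚ] Λ) : Λ →ₐ[ℚ] Λ) (T 1 + T (-1) : Λ)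
  have h2 : ((invert : Λ ≃ₐ[ℚ] Λ) : Λ →ₐ[ℚ] Λ) (T 1 + T (-1) : Λ) = (T 1 + T (-1) : Λ) := by
    simp [map_add, add_comm]
  rw [h2] at h
  have h3 : lbar (θQ p) =
      (((invert : Λ ≃ₐ[ℚ] Λ) : Λ →ₐ[ℚ] Λ).comp (Polynomial.aeval (T 1 + T (-1) : Λ))) p := rfl
  rw [h3, ← h]; rfl

lemma evalL_T (q : ℚˣ) (n : ℤ) : evalL q (T n) = (q : ℚ)^n := by
  rw [T, evalL, AddMonoidAlgebra.lift_single]; simp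

lemma evalL_theta (q : ℚˣ) (p : Polynomial ℚ) :
    evalL q (θQ p) = p.eval ((q : ℚ) + (q : ℚ)⁻¹) := by
  have h := Polynomial.aeval_algHom (evalL q) (T 1 + T (-1) : Λ)
  have h2 : evalL q (T 1 + T (-1) : Λ) = (q : ℚ) + (q : ℚ)⁻¹ := by
    rw [map_add, evalL_T, evalL_T]
    simp [zpow_neg]
  have h3 : evalL q (θQ p) = ((evalL q).comp (Polynomial.aeval (T 1 + T (-1) : Λ))) p := rfl
  rw [h3, ← h, h2, Polynomial.coe_aeval_eq_eval]

lemma theta_inj : Function.Injective θQ := by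
  have key : ∀ p : Polynomial ℚ, θQ p = 0 → p = 0 := by
    intro p hp
    apply Polynomial.eq_zero_of_infinite_isRoot
    apply Set.infinite_of_injective_forall_mem
      (f := fun n : ℕ => (n+2 : ℚ) + (n+2 : ℚ)⁻¹)
    · have hmono : StrictMono (fun n : ℕ => (n+2 : ℚ) + (n+2 : ℚ)⁻¹) := by
        intro a b hab
        have hb : (a:ℚ) + 2 < (b:ℚ) + 2 := by
          have : (a:ℚ) < b := by exact_mod_cast hab
          linarith
        have hapos : (0:ℚ) < (a:ℚ)+2 := by positivity
        have hbpos : (0:ℚ) < (b:ℚ)+2 := by positivity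
        have h1 : ((a:ℚ)+2)⁻¹ - ((b:ℚ)+2)⁻¹ < ((b:ℚ)+2) - ((a:ℚ)+2) := by
          rw [inv_sub_inv (ne_of_gt hapos) (ne_of_gt hbpos), div_lt_iff₀ (by positivity)]
          have h2 : (1:ℚ) < ((a:ℚ)+2)*((b:ℚ)+2) := by
            nlinarith [Nat.cast_nonneg (α := ℚ) a, Nat.cast_nonneg (α := ℚ) b]
          nlinarith
        simp only
        linarith
      exact hmono.injective
    · intro n
      have hq : ((n:ℚ)+2) ≠ 0 := by positivity
      have := evalL_theta (Units.mk0 _ hq) p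
      rw [hp, map_zero] at this
      exact this.symm
  intro a b hab
  have h0 : θQ (a - b) = 0 := by rw [map_sub, hab, sub_self]
  exact sub_eq_zero.mp (key _ h0)

lemma thetaX : θQ Polynomial.X = T 1 + T (-1) := Polynomial.aeval_X _

lemma hT_mul : (T 1 : Λ) * T (-1) = 1 := by rw [← T_add]; norm_num

lemma Trep (n : ℤ) : ∃ a b : Polynomial ℚ, (T n : Λ) = θQ a + θQ b * T 1 := by
  induction n using Int.induction_on with
  | zero => exact ⟨1, 0, by simp⟩
  | succ k ih =>
    obtain ⟨a, b, h⟩ := ih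
    refine ⟨-b, a + Polynomial.X * b, ?_⟩
    have h1 : (T ((k:ℤ)+1) : Λ) = T k * T 1 := T_add _ _
    rw [h1, h]
    simp only [map_add, map_mul, map_neg, thetaX]
    linear_combination (-(θQ b)) * hT_mul
  | pred k ih =>
    obtain ⟨a, b, h⟩ := ih
    refine ⟨Polynomial.X * a + b, -a, ?_⟩
    have h1 : (T (-(k:ℤ)-1) : Λ) = T (-k) * T (-1) := by rw [← T_add]; ring_nf
    rw [h1, h]
    have h2 : (T (-1) : Λ) = (T 1 + T (-1)) - T 1 := by ring
    rw [h2, ← thetaX]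
    simp only [map_add, map_mul, map_neg, thetaX]
    linear_combination (θQ b) * hT_mul

lemma exists_ab (P : Λ) : ∃ a b : Polynomial ℚ, P = θQ a + θQ b * T 1 := by
  induction P using LaurentPolynomial.induction_on' with
  | add p q hp hq =>
    obtain ⟨a, b, hp⟩ := hp; obtain ⟨c, d, hq⟩ := hq
    exact ⟨a + c, b + d, by rw [hp, hq]; simp only [map_add]; ring⟩
  | C_mul_T n r =>
    obtain ⟨a, b, h⟩ := Trep n
    refine ⟨Polynomial.C r * a, Polynomial.C r * b, ?_⟩
    have hc : θQ (Polynomial.C r) = C r := by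
      rw [θQ, Polynomial.aeval_C]; rfl
    rw [h]
    simp only [map_mul, hc]
    ring

instance lamNoZero : NoZeroDivisors Λ := by
  have h : NoZeroDivisors (AddMonoidAlgebra ℚ ℤ) := inferInstance
  exact h

lemma Tdiff_ne : (T 1 : Λ) - T (-1) ≠ 0 := by
  intro h
  have h2 := congrArg (evalL (Units.mk0 2 (by norm_num))) h
  rw [map_sub, evalL_T, evalL_T, map_zero] at h2
  norm_num at h2

lemma uniq_b (a b : Polynomial ℚ) (h : θQ a + θQ b * T 1 = 0) : a = 0 ∧ b = 0 := by
  have h2 := congrArg lbar h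
  rw [map_add, map_mul, lbar_theta, lbar_theta, lbar_T', map_zero] at h2
  have h3 : θQ b * (T 1 - T (-1)) = 0 := by
    linear_combination h - h2
  rcases mul_eq_zero.mp h3 with hb | ht
  · have hb0 : b = 0 := theta_inj (by rw [hb, map_zero])
    subst hb0
    simp only [map_zero, zero_mul, add_zero] at h
    exact ⟨theta_inj (by rw [h, map_zero]), rfl⟩
  · exact absurd ht Tdiff_ne

lemma symm_mem_range (P : Λ) (h : lbar P = P) : ∃ a, θQ a = P := by
  obtain ⟨a, b, hab⟩ := exists_ab P
  have h2 : θQ a + θQ b * T (-1) = P := by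
    conv_rhs => rw [← h, hab]
    rw [map_add, map_mul, lbar_theta, lbar_theta, lbar_T']
  have h3 : θQ b * (T 1 - T (-1)) = 0 := by
    rw [hab] at h2; linear_combination -h2
  rcases mul_eq_zero.mp h3 with hb | ht
  · exact ⟨a, by rw [hab, hb, zero_mul, add_zero]⟩
  · exact absurd ht Tdiff_ne

lemma theta_dvd (p q : Polynomial ℚ) (h : θQ q ∣ θQ p) : q ∣ p := by
  obtain ⟨c, hc⟩ := h
  obtain ⟨a, b, hab⟩ := exists_ab c
  rw [hab, mul_add, ← mul_assoc, ← map_mul, ← map_mul] at hc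
  have h0 : θQ (q * a - p) + θQ (q * b) * T 1 = 0 := by
    rw [map_sub]; linear_combination -hc
  obtain ⟨h1, h2⟩ := uniq_b _ _ h0
  exact ⟨a, (sub_eq_zero.mp h1).symm⟩

/-! ### Square roots of `1 + nilpotent` in a `ℚ`-algebra -/

def sqrtPoly (k : ℕ) : Polynomial ℚ :=
  ∑ i ∈ Finset.range k, Polynomial.monomial i (Ring.choose (1/2 : ℚ) i)

lemma sqrtPoly_coeff (k i : ℕ) (h : i < k) :
    (sqrtPoly k).coeff i = Ring.choose (1/2 : ℚ) i := by
  rw [sqrtPoly, Polynomial.finset_sum_coeff]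
  rw [Finset.sum_eq_single i]
  · simp
  · intro b _ hb; simp [Polynomial.coeff_monomial, hb]
  · intro hi; exact absurd (Finset.mem_range.mpr h) hi

lemma sqrtPoly_sq (k : ℕ) :
    (Polynomial.X : Polynomial ℚ)^k ∣ (sqrtPoly k * sqrtPoly k - (1 + Polynomial.X)) := by
  rw [Polynomial.X_pow_dvd_iff]
  intro d hd
  rw [Polynomial.coeff_sub, Polynomial.coeff_mul]
  have hsum : ∑ ij ∈ Finset.HasAntidiagonal.antidiagonal d, (sqrtPoly k).coeff ij.1 * (sqrtPoly k).coeff ij.2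
      = ∑ ij ∈ Finset.HasAntidiagonal.antidiagonal d, Ring.choose (1/2:ℚ) ij.1 * Ring.choose (1/2:ℚ) ij.2 := by
    apply Finset.sum_congr rfl
    rintro ⟨i, j⟩ hij
    rw [Finset.HasAntidiagonal.mem_antidiagonal] at hij
    have hi : i < k := lt_of_le_of_lt (by omega) hd
    have hj : j < k := lt_of_le_of_lt (by omega) hd
    rw [sqrtPoly_coeff k i hi, sqrtPoly_coeff k j hj]
  rw [hsum, ← Ring.add_choose_eq d (Commute.all _ _)]
  have hhalf : (1/2 : ℚ) + 1/2 = ((1:ℕ) : ℚ) := by norm_num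
  rw [hhalf, Ring.choose_natCast]
  rcases d with _ | d
  · simp
  rcases d with _ | d
  · simp [Polynomial.coeff_one]
  · simp [Nat.choose, Polynomial.coeff_add, Polynomial.coeff_X, Polynomial.coeff_one]

lemma sqrt_of_nilpotent {A : Type*} [CommRing A] [Algebra ℚ A] (m : A) (k : ℕ)
    (hk : m^k = 0) : ∃ v : A, v * v = 1 + m := by
  obtain ⟨W, hW⟩ := sqrtPoly_sq k
  refine ⟨Polynomial.aeval m (sqrtPoly k), ?_⟩
  have h := congrArg (Polynomial.aeval m) hW
  rw [map_sub, map_mul, map_mul, map_pow, map_add, map_one, Polynomial.aeval_X, hk,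
    zero_mul] at h
  linear_combination h

/-! ### Quotient ring lemmas -/

/-- The reduction map `Eₙ → E₁`. -/
def redE (Δ : Λ) (n : ℕ) (hn : 1 ≤ n) : En Δ n →+* En Δ 1 :=
  Ideal.Quotient.factor (by
    rw [Ideal.span_le, Set.singleton_subset_iff, SetLike.mem_coe, Ideal.mem_span_singleton,
      pow_one]
    exact dvd_pow_self Δ (by omega))

section helpers

variable (Δ : Λ) (Δs : Polynomial ℚ) (hθ : θQ Δs = Δ) (hsym : lbar Δ = Δ) (n : ℕ) (hn : 1 ≤ n)

lemma iDE_mk (p : Polynomial ℚ) :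
    ιDE Δ Δs hθ n (Ideal.Quotient.mk _ p) = Ideal.Quotient.mk _ (θQ p) :=
  Ideal.quotientMap_mk

lemma barE_mk (P : Λ) :
    barE Δ hsym n (Ideal.Quotient.mk _ P) = Ideal.Quotient.mk _ (lbar P) :=
  Ideal.quotientMap_mk

lemma redD_mk (p : Polynomial ℚ) :
    redD Δs n hn (Ideal.Quotient.mk _ p) = Ideal.Quotient.mk _ p :=
  Ideal.Quotient.factor_mk _ _

lemma redE_mk (P : Λ) :
    redE Δ n hn (Ideal.Quotient.mk _ P) = Ideal.Quotient.mk _ P :=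
  Ideal.Quotient.factor_mk _ _

lemma redE_iDE (x : Dn Δs n) :
    redE Δ n hn (ιDE Δ Δs hθ n x) = ιDE Δ Δs hθ 1 (redD Δs n hn x) := by
  obtain ⟨p, rfl⟩ := Ideal.Quotient.mk_surjective x
  rw [iDE_mk, redE_mk, redD_mk, iDE_mk]

lemma redE_barE (x : En Δ n) :
    redE Δ n hn (barE Δ hsym n x) = barE Δ hsym 1 (redE Δ n hn x) := by
  obtain ⟨P, rfl⟩ := Ideal.Quotient.mk_surjective x
  rw [barE_mk, redE_mk, redE_mk, barE_mk]

lemma barE_iDE (x : Dn Δs n) :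
    barE Δ hsym n (ιDE Δ Δs hθ n x) = ιDE Δ Δs hθ n x := by
  obtain ⟨p, rfl⟩ := Ideal.Quotient.mk_surjective x
  rw [iDE_mk, barE_mk, lbar_theta]

lemma barE_barE (x : En Δ n) : barE Δ hsym n (barE Δ hsym n x) = x := by
  obtain ⟨P, rfl⟩ := Ideal.Quotient.mk_surjective x
  rw [barE_mk, barE_mk, lbar_lbar]

lemma iDE_inj : Function.Injective (ιDE Δ Δs hθ n) := by
  intro x y hxy
  obtain ⟨a, rfl⟩ := Ideal.Quotient.mk_surjective x
  obtain ⟨b, rfl⟩ := Ideal.Quotient.mk_surjective y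
  rw [iDE_mk, iDE_mk, Ideal.Quotient.eq, Ideal.mem_span_singleton] at hxy
  rw [Ideal.Quotient.eq, Ideal.mem_span_singleton]
  have hpow : (Δ : Λ)^n = θQ (Δs^n) := by rw [map_pow, hθ]
  rw [hpow, ← map_sub] at hxy
  exact theta_dvd _ _ hxy

lemma symmE_range (x : En Δ n) (h : barE Δ hsym n x = x) :
    ∃ d : Dn Δs n, ιDE Δ Δs hθ n d = x := by
  obtain ⟨P, rfl⟩ := Ideal.Quotient.mk_surjective x
  rw [barE_mk, Ideal.Quotient.eq] at h
  set P' : Λ := algebraMap ℚ Λ (1/2) * (P + lbar P) with hP'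
  have hsymP' : lbar P' = P' := by
    rw [hP', map_mul, map_add, lbar_lbar]
    have : lbar (algebraMap ℚ Λ (1/2)) = algebraMap ℚ Λ (1/2) := by
      have := (invert : Λ ≃ₐ[ℚ] Λ).commutes (1/2 : ℚ)
      exact this
    rw [this, add_comm]
  obtain ⟨a, ha⟩ := symm_mem_range P' hsymP'
  refine ⟨Ideal.Quotient.mk _ a, ?_⟩
  rw [iDE_mk, ha, Ideal.Quotient.eq]
  have hc : (algebraMap ℚ Λ) (1/2) + (algebraMap ℚ Λ) (1/2) = 1 := by
    rw [← map_add]; norm_num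
  have hPP : P' - P = algebraMap ℚ Λ (1/2) * (lbar P - P) := by
    rw [hP']; linear_combination P * hc
  rw [hPP]
  exact Ideal.mul_mem_left _ _ h

lemma ker_redD_nilpotent (x : Dn Δs n) (h : redD Δs n hn x = 0) : x^n = 0 := by
  obtain ⟨p, rfl⟩ := Ideal.Quotient.mk_surjective x
  rw [redD_mk, Ideal.Quotient.eq_zero_iff_mem, Ideal.mem_span_singleton, pow_one] at h
  rw [← map_pow, Ideal.Quotient.eq_zero_iff_mem, Ideal.mem_span_singleton]
  exact pow_dvd_pow_of_dvd h n

lemma ker_redE_nilpotent (x : En Δ n) (h : redE Δ n hn x = 0) : x^n = 0 := by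
  obtain ⟨P, rfl⟩ := Ideal.Quotient.mk_surjective x
  rw [redE_mk, Ideal.Quotient.eq_zero_iff_mem, Ideal.mem_span_singleton, pow_one] at h
  rw [← map_pow, Ideal.Quotient.eq_zero_iff_mem, Ideal.mem_span_singleton]
  exact pow_dvd_pow_of_dvd h n

lemma redD_surj : Function.Surjective (redD Δs n hn) := by
  intro y
  obtain ⟨p, rfl⟩ := Ideal.Quotient.mk_surjective y
  exact ⟨Ideal.Quotient.mk _ p, redD_mk _ _ _ _⟩

lemma redE_surj : Function.Surjective (redE Δ n hn) := by
  intro y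
  obtain ⟨P, rfl⟩ := Ideal.Quotient.mk_surjective y
  exact ⟨Ideal.Quotient.mk _ P, redE_mk _ _ _ _⟩

lemma isUnit_of_redD (x : Dn Δs n) (h : IsUnit (redD Δs n hn x)) : IsUnit x := by
  obtain ⟨y, hy⟩ := redD_surj Δs n hn (↑h.unit⁻¹ : Dn Δs 1)
  have hz : redD Δs n hn (x * y - 1) = 0 := by
    rw [map_sub, map_mul, hy, map_one, h.mul_val_inv, sub_self]
  have hnil : (x * y - 1)^n = 0 := ker_redD_nilpotent Δs n hn _ hz
  have hu : IsUnit (x * y) := by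
    have := IsNilpotent.isUnit_add_right_of_commute (r := x * y - 1) (u := (1 : Dn Δs n))
      ⟨n, hnil⟩ isUnit_one (Commute.all _ _)
    simpa using this
  exact isUnit_of_mul_isUnit_left hu

lemma isUnit_of_redE (x : En Δ n) (h : IsUnit (redE Δ n hn x)) : IsUnit x := by
  obtain ⟨y, hy⟩ := redE_surj Δ n hn (↑h.unit⁻¹ : En Δ 1)
  have hz : redE Δ n hn (x * y - 1) = 0 := by
    rw [map_sub, map_mul, hy, map_one, h.mul_val_inv, sub_self]
  have hnil : (x * y - 1)^n = 0 := ker_redE_nilpotent Δ n hn _ hz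
  have hu : IsUnit (x * y) := by
    have := IsNilpotent.isUnit_add_right_of_commute (r := x * y - 1) (u := (1 : En Δ n))
      ⟨n, hnil⟩ isUnit_one (Commute.all _ _)
    simpa using this
  exact isUnit_of_mul_isUnit_left hu

end helpers

/-- the reduction `Dₙ → D₁` induces an isomorphism of cokernels. -/
theorem stmt_3 (Δ : Λ) (Δs : Polynomial ℚ)
    (hΔ : (Irreducible Δ ∧ SymmL Δ) ∨ Δ = tΛ + 2 + T (-1))
    (hsym : lbar Δ = Δ) (hθ : θQ Δs = Δ) (n : ℕ) (hn : 1 ≤ n) :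
    ∃ e : ((Dn Δs n)ˣ ⧸ normSub Δ Δs hθ hsym n) ≃*
          ((Dn Δs 1)ˣ ⧸ normSub Δ Δs hθ hsym 1),
      ∀ d : (Dn Δs n)ˣ,
        e (QuotientGroup.mk d) =
          QuotientGroup.mk (Units.map (redD Δs n hn).toMonoidHom d) := by
  classical
  set f : (Dn Δs n)ˣ →* (Dn Δs 1)ˣ := Units.map (redD Δs n hn).toMonoidHom with hf
  have h_le : normSub Δ Δs hθ hsym n ≤ Subgroup.comap f (normSub Δ Δs hθ hsym 1) := by
    rintro d ⟨R, hR⟩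
    refine ⟨Units.map (redE Δ n hn).toMonoidHom R, ?_⟩
    have h1 : ((f d : (Dn Δs 1)ˣ) : Dn Δs 1) = redD Δs n hn (d : Dn Δs n) := rfl
    have h2 : ((Units.map (redE Δ n hn).toMonoidHom R : (En Δ 1)ˣ) : En Δ 1)
        = redE Δ n hn (R : En Δ n) := rfl
    rw [h1, h2, ← redE_iDE, hR, map_mul, redE_barE]
  let e0 : ((Dn Δs n)ˣ ⧸ normSub Δ Δs hθ hsym n) →* ((Dn Δs 1)ˣ ⧸ normSub Δ Δs hθ hsym 1) :=
    QuotientGroup.map _ _ f h_le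
  have f_surj : Function.Surjective f := by
    intro u₁
    obtain ⟨x, hx⟩ := redD_surj Δs n hn (u₁ : Dn Δs 1)
    have hux : IsUnit x := isUnit_of_redD Δs n hn x (by rw [hx]; exact u₁.isUnit)
    refine ⟨hux.unit, Units.ext ?_⟩
    show redD Δs n hn ((hux.unit : (Dn Δs n)ˣ) : Dn Δs n) = (u₁ : Dn Δs 1)
    rw [hux.unit_spec, hx]
  have e0_surj : Function.Surjective e0 := by
    intro y
    obtain ⟨u₁, rfl⟩ := QuotientGroup.mk_surjective y
    obtain ⟨d, rfl⟩ := f_surj u₁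
    exact ⟨QuotientGroup.mk d, rfl⟩
  have e0_inj : Function.Injective e0 := by
    rw [injective_iff_map_eq_one]
    intro x hx
    obtain ⟨d, rfl⟩ := QuotientGroup.mk_surjective x
    have hfd : f d ∈ normSub Δ Δs hθ hsym 1 := (QuotientGroup.eq_one_iff _).mp hx
    obtain ⟨R₁, hR₁⟩ := hfd
    obtain ⟨y, hy⟩ := redE_surj Δ n hn (R₁ : En Δ 1)
    have hyu : IsUnit y := isUnit_of_redE Δ n hn y (by rw [hy]; exact R₁.isUnit)
    set w : En Δ n := y * barE Δ hsym n y with hw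
    have hw_symm : barE Δ hsym n w = w := by rw [hw, map_mul, barE_barE, mul_comm]
    obtain ⟨d', hd'⟩ := symmE_range Δ Δs hθ hsym n w hw_symm
    have hfdval : ((f d : (Dn Δs 1)ˣ) : Dn Δs 1) = redD Δs n hn (d : Dn Δs n) := rfl
    have hred : redD Δs n hn d' = redD Δs n hn (d : Dn Δs n) := by
      apply iDE_inj Δ Δs hθ 1
      have hL : ιDE Δ Δs hθ 1 (redD Δs n hn d')
          = (R₁ : En Δ 1) * barE Δ hsym 1 (R₁ : En Δ 1) := by
        rw [← redE_iDE, hd', hw, map_mul, redE_barE, hy]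
      rw [hL, ← hR₁, hfdval]
    have hd'u : IsUnit d' := by
      rw [show d' = d' from rfl]
      apply isUnit_of_redD Δs n hn
      rw [hred]
      exact (d.isUnit).map (redD Δs n hn)
    set u' : (Dn Δs n)ˣ := hd'u.unit with hu'
    set c : (Dn Δs n)ˣ := d * u'⁻¹ with hc
    have hfu' : f u' = f d := by
      apply Units.ext
      show redD Δs n hn ((u' : (Dn Δs n)ˣ) : Dn Δs n) = redD Δs n hn (d : Dn Δs n)
      rw [show ((u' : (Dn Δs n)ˣ) : Dn Δs n) = d' from hd'u.unit_spec, hred]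
    have hfc : f c = 1 := by rw [hc, map_mul, map_inv, hfu', mul_inv_cancel]
    have hcv : redD Δs n hn ((c : (Dn Δs n)ˣ) : Dn Δs n) = 1 := by
      have : ((f c : (Dn Δs 1)ˣ) : Dn Δs 1) = redD Δs n hn ((c : (Dn Δs n)ˣ) : Dn Δs n) := rfl
      rw [← this, hfc, Units.val_one]
    have hm : (((c : (Dn Δs n)ˣ) : Dn Δs n) - 1)^n = 0 :=
      ker_redD_nilpotent Δs n hn _ (by rw [map_sub, hcv, map_one, sub_self])
    obtain ⟨v, hv⟩ := sqrt_of_nilpotent (((c : (Dn Δs n)ˣ) : Dn Δs n) - 1) n hm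
    have hvc : v * v = ((c : (Dn Δs n)ˣ) : Dn Δs n) := by rw [hv]; ring
    have hvu : IsUnit v := by
      have h3 : IsUnit (v * v) := by rw [hvc]; exact c.isUnit
      exact isUnit_of_mul_isUnit_left h3
    have hc_mem : c ∈ normSub Δ Δs hθ hsym n := by
      refine ⟨Units.map (ιDE Δ Δs hθ n).toMonoidHom hvu.unit, ?_⟩
      have h4 : ((Units.map (ιDE Δ Δs hθ n).toMonoidHom hvu.unit : (En Δ n)ˣ) : En Δ n)
          = ιDE Δ Δs hθ n v := by
        show ιDE Δ Δs hθ n ((hvu.unit : (Dn Δs n)ˣ) : Dn Δs n) = ιDE Δ Δs hθ n v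
        rw [hvu.unit_spec]
      rw [h4, barE_iDE, ← map_mul, hvc]
    have hu'_mem : u' ∈ normSub Δ Δs hθ hsym n := by
      refine ⟨hyu.unit, ?_⟩
      rw [show ((u' : (Dn Δs n)ˣ) : Dn Δs n) = d' from hd'u.unit_spec, hd', hw,
        hyu.unit_spec]
    have hdcu : d = c * u' := by rw [hc, inv_mul_cancel_right]
    rw [hdcu]
    exact (QuotientGroup.eq_one_iff _).mpr (mul_mem hc_mem hu'_mem)
  refine ⟨MulEquiv.ofBijective e0 ⟨e0_inj, e0_surj⟩, fun d => rfl⟩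
end
end

section
/- Let A be a finitely generated torsion Λ-module, φ a non-degenerate hermitian form on A, F a Λ-submodule of A, and F^⊥ = {y ∈ A : φ(x,y) = 0 for all x ∈ F} its orthogonal with respect to φ. Then A = F ⊕ F^⊥ if and only if F ∩ F^⊥ = 0. -/
open LaurentPolynomial

set_option maxHeartbeats 1000000
set_option synthInstance.maxHeartbeats 400000

noncomputable section
open Polynomial

lemma qbar_add (u v : QL) : qbar (u + v) = qbar u + qbar v := by
  obtain ⟨a, rfl⟩ := Submodule.mkQ_surjective ΛinK u
  obtain ⟨b, rfl⟩ := Submodule.mkQ_surjective ΛinK v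
  rw [← map_add, qbar_mk, qbar_mk, qbar_mk, map_add, map_add]

lemma kbar_smul (r : Λ) (a : KΛ) : kbar (r • a) = lbar r • kbar a := by
  have h1 : r • a = algebraMap Λ KΛ r * a := Algebra.smul_def r a
  have h2 : lbar r • kbar a = algebraMap Λ KΛ (lbar r) * kbar a :=
    Algebra.smul_def (lbar r) (kbar a)
  rw [h1, h2, map_mul, kbar_algebraMap]

lemma qbar_smul (r : Λ) (u : QL) : qbar (r • u) = lbar r • qbar u := by
  obtain ⟨a, rfl⟩ := Submodule.mkQ_surjective ΛinK u
  rw [← map_smul, qbar_mk, qbar_mk, ← map_smul]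
  congr 1
  exact kbar_smul r a

lemma qbar_zero : qbar (0 : QL) = 0 := by
  have : (0 : QL) = QLmk 0 := (map_zero QLmk).symm
  rw [this, qbar_mk, map_zero, map_zero]

lemma HermForm.bil_zero_left' {A : Type} [AddCommGroup A] [Module Λ A]
    (φ : HermForm A) (y : A) : φ.bil 0 y = 0 := by
  have h := φ.add_left 0 0 y
  rw [add_zero] at h
  exact (add_eq_left.mp h.symm)

lemma HermForm.bil_zero_right {A : Type} [AddCommGroup A] [Module Λ A]
    (φ : HermForm A) (x : A) : φ.bil x 0 = 0 := by
  rw [φ.conj_symm, φ.bil_zero_left', qbar_zero]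

lemma HermForm.add_right {A : Type} [AddCommGroup A] [Module Λ A]
    (φ : HermForm A) (x y z : A) : φ.bil x (y + z) = φ.bil x y + φ.bil x z := by
  rw [φ.conj_symm x (y + z), φ.add_left, qbar_add, ← φ.conj_symm, ← φ.conj_symm]

lemma HermForm.smul_right {A : Type} [AddCommGroup A] [Module Λ A]
    (φ : HermForm A) (r : Λ) (x y : A) : φ.bil x (r • y) = lbar r • φ.bil x y := by
  rw [φ.conj_symm x (r • y), φ.smul_left, qbar_smul, ← φ.conj_symm]

/-- The orthogonal `F^⊥` of a submodule `F` with respect to a hermitian form `φ`. -/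
def perp {A : Type} [AddCommGroup A] [Module Λ A] (φ : HermForm A)
    (F : Submodule Λ A) : Submodule Λ A where
  carrier := {y : A | ∀ x ∈ F, φ.bil x y = 0}
  zero_mem' := fun x _ => φ.bil_zero_right x
  add_mem' := by
    intro y z hy hz x hx
    rw [φ.add_right, hy x hx, hz x hx, add_zero]
  smul_mem' := by
    intro r y hy x hx
    rw [φ.smul_right, hy x hx, smul_zero]

variable (p : Polynomial ℚ)

lemma ar_key (hc : p.coeff 0 ≠ 0) :
    AdjoinRoot.root p * AdjoinRoot.mk p (divX p) = -algebraMap ℚ _ (p.coeff 0) := by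
  have := congrArg (AdjoinRoot.mk p) (X_mul_divX_add p)
  rw [map_add, map_mul, AdjoinRoot.mk_X, AdjoinRoot.mk_C, AdjoinRoot.mk_self] at this
  rw [← AdjoinRoot.algebraMap_eq] at this
  linear_combination this

def arUnit (hc : p.coeff 0 ≠ 0) : (AdjoinRoot p)ˣ where
  val := AdjoinRoot.root p
  inv := -(algebraMap ℚ _ (p.coeff 0)⁻¹) * AdjoinRoot.mk p (divX p)
  val_inv := by
    calc AdjoinRoot.root p * (-(algebraMap ℚ _ (p.coeff 0)⁻¹) * AdjoinRoot.mk p (divX p))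
        = -(algebraMap ℚ _ (p.coeff 0)⁻¹) * (AdjoinRoot.root p * AdjoinRoot.mk p (divX p)) := by
          ring
      _ = -(algebraMap ℚ _ (p.coeff 0)⁻¹) * -algebraMap ℚ _ (p.coeff 0) := by rw [ar_key p hc]
      _ = algebraMap ℚ _ ((p.coeff 0)⁻¹ * p.coeff 0) := by rw [map_mul]; ring
      _ = 1 := by rw [inv_mul_cancel₀ hc, map_one]
  inv_val := by
    calc (-(algebraMap ℚ _ (p.coeff 0)⁻¹) * AdjoinRoot.mk p (divX p)) * AdjoinRoot.root p
        = -(algebraMap ℚ _ (p.coeff 0)⁻¹) * (AdjoinRoot.root p * AdjoinRoot.mk p (divX p)) := by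
          ring
      _ = -(algebraMap ℚ _ (p.coeff 0)⁻¹) * -algebraMap ℚ _ (p.coeff 0) := by rw [ar_key p hc]
      _ = algebraMap ℚ _ ((p.coeff 0)⁻¹ * p.coeff 0) := by rw [map_mul]; ring
      _ = 1 := by rw [inv_mul_cancel₀ hc, map_one]

lemma arUnit_val (hc : p.coeff 0 ≠ 0) : ((arUnit p hc : (AdjoinRoot p)ˣ) : AdjoinRoot p) = AdjoinRoot.root p := rfl

def evalAR (hc : p.coeff 0 ≠ 0) : Λ →ₐ[ℚ] AdjoinRoot p :=
  AddMonoidAlgebra.lift ℚ (AdjoinRoot p) ℤ ((Units.coeHom _).comp (zpowersHom (AdjoinRoot p)ˣ (arUnit p hc)))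

lemma evalAR_T (hc : p.coeff 0 ≠ 0) (n : ℤ) :
    evalAR p hc (T n) = ((arUnit p hc ^ n : (AdjoinRoot p)ˣ) : AdjoinRoot p) := by
  rw [evalAR, T]
  rw [AddMonoidAlgebra.lift_single]
  simp

lemma evalAR_toLaurent (hc : p.coeff 0 ≠ 0) (f : Polynomial ℚ) :
    evalAR p hc (Polynomial.toLaurent f) = AdjoinRoot.mk p f := by
  have h : (evalAR p hc).comp Polynomial.toLaurentAlg = Polynomial.aeval (AdjoinRoot.root p) := by
    apply Polynomial.algHom_ext
    have : Polynomial.toLaurentAlg (X : Polynomial ℚ) = T 1 := by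
      simp [Polynomial.toLaurent_X]
    simp only [AlgHom.comp_apply, this, Polynomial.aeval_X, evalAR_T]
    simp [arUnit_val]
  have := congrArg (fun g => g f) h
  simpa [AdjoinRoot.aeval_eq] using this

lemma evalAR_ker {p : Polynomial ℚ} (hc : p.coeff 0 ≠ 0) {r : Λ} (h : evalAR p hc r = 0) :
    r ∈ Ideal.span {Polynomial.toLaurent p} := by
  obtain ⟨n, P, hP⟩ := exists_T_pow r
  have h1 : evalAR p hc (Polynomial.toLaurent P) = 0 := by
    rw [hP, map_mul, h, zero_mul]
  rw [evalAR_toLaurent, AdjoinRoot.mk_eq_zero] at h1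
  obtain ⟨s, hs⟩ := h1
  have hr : r = Polynomial.toLaurent p * (Polynomial.toLaurent s * T (-n)) := by
    have h2 : r = Polynomial.toLaurent P * T (-n) := by
      rw [hP, mul_assoc, ← T_add]
      simp
    rw [h2, hs, map_mul]
    ring
  rw [hr]
  exact Ideal.mul_mem_right _ _ (Ideal.subset_span rfl)

lemma evalAR_span_zero {p : Polynomial ℚ} (hc : p.coeff 0 ≠ 0) :
    ∀ a ∈ Ideal.span {Polynomial.toLaurent p}, evalAR p hc a = 0 := by
  intro a ha
  rw [Ideal.mem_span_singleton] at ha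
  obtain ⟨s, rfl⟩ := ha
  rw [map_mul, evalAR_toLaurent, AdjoinRoot.mk_self, zero_mul]

def gB {p : Polynomial ℚ} (hc : p.coeff 0 ≠ 0) :
    (Λ ⧸ Ideal.span {Polynomial.toLaurent p}) →ₐ[ℚ] AdjoinRoot p :=
  Ideal.Quotient.liftₐ _ (evalAR p hc) (evalAR_span_zero hc)

lemma gB_mk {p : Polynomial ℚ} (hc : p.coeff 0 ≠ 0) (r : Λ) :
    gB hc (Ideal.Quotient.mk _ r) = evalAR p hc r := by
  rw [gB, Ideal.Quotient.liftₐ_apply]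
  rfl

lemma gB_injective {p : Polynomial ℚ} (hc : p.coeff 0 ≠ 0) : Function.Injective (gB hc) := by
  intro x y hxy
  obtain ⟨r, rfl⟩ := Ideal.Quotient.mk_surjective x
  obtain ⟨s, rfl⟩ := Ideal.Quotient.mk_surjective y
  rw [gB_mk, gB_mk] at hxy
  rw [Ideal.Quotient.eq]
  exact evalAR_ker hc (by rw [map_sub, hxy, sub_self])

def ellAR (p : Polynomial ℚ) (hm : p.Monic) : AdjoinRoot p →ₗ[ℚ] ℚ :=
  (Polynomial.lcoeff ℚ (p.natDegree - 1)).comp (AdjoinRoot.modByMonicHom hm)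

lemma sep_AR {p : Polynomial ℚ} (hm : p.Monic) (z : AdjoinRoot p) (hz : z ≠ 0) :
    ∃ e : ℕ, ellAR p hm ((AdjoinRoot.root p)^e * z) ≠ 0 := by
  set g := AdjoinRoot.modByMonicHom hm z with hgdef
  have hmkg : AdjoinRoot.mk p g = z := AdjoinRoot.mk_leftInverse hm z
  have hg0 : g ≠ 0 := by
    intro h
    exact hz (by rw [← hmkg, h, map_zero])
  have hgmod : g %ₘ p = g := by
    have := AdjoinRoot.modByMonicHom_mk hm g
    rw [hmkg, ← hgdef] at this
    exact this.symm
  have hdeg : g.degree < p.degree := by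
    rw [← hgmod]
    exact Polynomial.degree_modByMonic_lt g hm
  have hd : g.natDegree < p.natDegree := Polynomial.natDegree_lt_natDegree hg0 hdeg
  refine ⟨p.natDegree - 1 - g.natDegree, ?_⟩
  have hz' : (AdjoinRoot.root p)^(p.natDegree - 1 - g.natDegree) * z
      = AdjoinRoot.mk p (X^(p.natDegree - 1 - g.natDegree) * g) := by
    rw [map_mul, map_pow, AdjoinRoot.mk_X, hmkg]
  rw [hz']
  have hdeg2 : (X^(p.natDegree - 1 - g.natDegree) * g).degree < p.degree := by
    apply Polynomial.degree_lt_degree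
    rw [(Polynomial.monic_X_pow _).natDegree_mul' hg0, Polynomial.natDegree_X_pow]
    omega
  have hmod2 : (X^(p.natDegree - 1 - g.natDegree) * g) %ₘ p
      = X^(p.natDegree - 1 - g.natDegree) * g :=
    (Polynomial.modByMonic_eq_self_iff hm).2 hdeg2
  rw [ellAR]
  simp only [LinearMap.comp_apply, AdjoinRoot.modByMonicHom_mk, hmod2, Polynomial.lcoeff_apply]
  set e := p.natDegree - 1 - g.natDegree with he
  have heq : p.natDegree - 1 = g.natDegree + e := by omega
  rw [heq, Polynomial.coeff_X_pow_mul]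
  exact mt Polynomial.leadingCoeff_eq_zero.mp hg0

lemma fdAR {p : Polynomial ℚ} (hm : p.Monic) : FiniteDimensional ℚ (AdjoinRoot p) :=
  Module.Finite.of_basis (AdjoinRoot.powerBasisAux' hm)


def nu (Δ : Λ) : Λ →ₗ[Λ] QL :=
  QLmk.comp (LinearMap.toSpanSingleton Λ KΛ ((algebraMap Λ KΛ Δ)⁻¹))

lemma nu_apply (Δ r : Λ) : nu Δ r = QLmk (r • (algebraMap Λ KΛ Δ)⁻¹) := rfl

lemma algKinj : Function.Injective (algebraMap Λ KΛ) := IsFractionRing.injective Λ KΛ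

lemma lsmulK (r : Λ) (x : KΛ) : r • x = algebraMap Λ KΛ r * x := by
  rw [← algebraMap_smul KΛ r x, smul_eq_mul]

lemma nu_eq_zero {Δ : Λ} (hΔ : Δ ≠ 0) {r : Λ} : nu Δ r = 0 ↔ Δ ∣ r := by
  have hΔK : algebraMap Λ KΛ Δ ≠ 0 := fun h => hΔ (algKinj (by rw [h, map_zero]))
  rw [nu_apply, Submodule.mkQ_apply, Submodule.Quotient.mk_eq_zero]
  constructor
  · rintro ⟨s, hs⟩
    refine ⟨s, algKinj ?_⟩
    have : (algebraMap Λ KΛ) s = r • (algebraMap Λ KΛ Δ)⁻¹ := hs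
    rw [lsmulK] at this
    rw [map_mul]
    field_simp at this ⊢
    rw [← this]
  · rintro ⟨s, rfl⟩
    refine ⟨s, ?_⟩
    show (algebraMap Λ KΛ) s = _
    rw [lsmulK, map_mul]
    field_simp

lemma nu_surj_torsion {Δ : Λ} (hΔ : Δ ≠ 0) {u : QL} (hu : Δ • u = 0) : ∃ r : Λ, nu Δ r = u := by
  have hΔK : algebraMap Λ KΛ Δ ≠ 0 := fun h => hΔ (algKinj (by rw [h, map_zero]))
  obtain ⟨f, rfl⟩ := Submodule.mkQ_surjective ΛinK u
  rw [← map_smul, Submodule.mkQ_apply, Submodule.Quotient.mk_eq_zero] at hu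
  obtain ⟨r, hr⟩ := hu
  refine ⟨r, ?_⟩
  rw [nu_apply]
  congr 1
  have : (algebraMap Λ KΛ) r = Δ • f := hr
  rw [lsmulK] at this
  rw [lsmulK]
  field_simp
  rw [this]

lemma toLaurent_p_ne {p : Polynomial ℚ} (hm : p.Monic) : (Polynomial.toLaurent p : Λ) ≠ 0 := by
  rw [Polynomial.toLaurent_ne_zero]
  exact hm.ne_zero

open Classical in
def ellQ {p : Polynomial ℚ} (hm : p.Monic) (hc : p.coeff 0 ≠ 0) : QL → ℚ := fun u =>
  if h : ∃ r : Λ, nu (Polynomial.toLaurent p) r = u then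
    ellAR p hm (gB hc (Ideal.Quotient.mk _ h.choose))
  else 0

lemma ellQ_eq {p : Polynomial ℚ} (hm : p.Monic) (hc : p.coeff 0 ≠ 0) {r : Λ} {u : QL}
    (hr : nu (Polynomial.toLaurent p) r = u) :
    ellQ hm hc u = ellAR p hm (gB hc (Ideal.Quotient.mk _ r)) := by
  have h : ∃ r : Λ, nu (Polynomial.toLaurent p) r = u := ⟨r, hr⟩
  simp only [ellQ]
  rw [dif_pos h]
  have hch : nu (Polynomial.toLaurent p) h.choose = u := h.choose_spec
  have hdvd : nu (Polynomial.toLaurent p) (h.choose - r) = 0 := by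
    rw [map_sub, hch, hr, sub_self]
  rw [nu_eq_zero (toLaurent_p_ne hm)] at hdvd
  have hmk : (Ideal.Quotient.mk (Ideal.span {(Polynomial.toLaurent p : Λ)})) h.choose
      = Ideal.Quotient.mk _ r := by
    rw [Ideal.Quotient.eq]
    exact (Ideal.mem_span_singleton).2 hdvd
  rw [hmk]

lemma ellQ_add {p : Polynomial ℚ} (hm : p.Monic) (hc : p.coeff 0 ≠ 0) {u v : QL}
    (hu : (Polynomial.toLaurent p : Λ) • u = 0) (hv : (Polynomial.toLaurent p : Λ) • v = 0) :
    ellQ hm hc (u + v) = ellQ hm hc u + ellQ hm hc v := by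
  obtain ⟨r, hr⟩ := nu_surj_torsion (toLaurent_p_ne hm) hu
  obtain ⟨s, hs⟩ := nu_surj_torsion (toLaurent_p_ne hm) hv
  have hrs : nu (Polynomial.toLaurent p) (r + s) = u + v := by rw [map_add, hr, hs]
  rw [ellQ_eq hm hc hr, ellQ_eq hm hc hs, ellQ_eq hm hc hrs, map_add, map_add, map_add]

lemma ellQ_ratsmul {p : Polynomial ℚ} (hm : p.Monic) (hc : p.coeff 0 ≠ 0) (q : ℚ) {u : QL}
    (hu : (Polynomial.toLaurent p : Λ) • u = 0) :
    ellQ hm hc ((algebraMap ℚ Λ q) • u) = q * ellQ hm hc u := by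
  obtain ⟨r, hr⟩ := nu_surj_torsion (toLaurent_p_ne hm) hu
  have hqr : nu (Polynomial.toLaurent p) (algebraMap ℚ Λ q * r) = (algebraMap ℚ Λ q) • u := by
    rw [← smul_eq_mul, map_smul, hr]
  rw [ellQ_eq hm hc hr, ellQ_eq hm hc hqr, map_mul, map_mul]
  have hcom : gB hc (Ideal.Quotient.mk _ (algebraMap ℚ Λ q)) = algebraMap ℚ _ q := by
    rw [gB_mk]; exact (evalAR p hc).commutes q
  rw [hcom, ← Algebra.smul_def, map_smul, smul_eq_mul]

lemma ellQ_sep {p : Polynomial ℚ} (hm : p.Monic) (hc : p.coeff 0 ≠ 0) {u : QL}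
    (hu : (Polynomial.toLaurent p : Λ) • u = 0) (hu0 : u ≠ 0) :
    ∃ rr : Λ, ellQ hm hc (rr • u) ≠ 0 := by
  obtain ⟨r, hr⟩ := nu_surj_torsion (toLaurent_p_ne hm) hu
  have hz : gB hc (Ideal.Quotient.mk _ r) ≠ 0 := by
    intro h
    have : (Ideal.Quotient.mk (Ideal.span {(Polynomial.toLaurent p : Λ)}) r) = 0 := by
      apply gB_injective hc
      rw [h, map_zero]
    rw [Ideal.Quotient.eq_zero_iff_mem, Ideal.mem_span_singleton] at this
    exact hu0 (by rw [← hr, (nu_eq_zero (toLaurent_p_ne hm)).2 this])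
  obtain ⟨e, he⟩ := sep_AR hm _ hz
  refine ⟨T e, ?_⟩
  have hTr : nu (Polynomial.toLaurent p) (T e * r) = (T (e : ℤ) : Λ) • u := by
    rw [← smul_eq_mul, map_smul, hr]
  rw [ellQ_eq hm hc hTr, map_mul, map_mul, gB_mk, evalAR_T]
  have : ((arUnit p hc ^ (e : ℤ) : (AdjoinRoot p)ˣ) : AdjoinRoot p) = (AdjoinRoot.root p)^e := by
    rw [zpow_natCast, Units.val_pow_eq_pow_val, arUnit_val]
  rw [this]
  exact he

lemma fdBq {p : Polynomial ℚ} (hm : p.Monic) (hc : p.coeff 0 ≠ 0) :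
    FiniteDimensional ℚ (Λ ⧸ Ideal.span {(Polynomial.toLaurent p : Λ)}) := by
  have := fdAR hm
  exact FiniteDimensional.of_injective (gB hc).toLinearMap (gB_injective hc)

section Ann
variable (A : Type) [AddCommGroup A] [Module Λ A]

lemma exists_ann [Module.Finite Λ A] (htors : Module.IsTorsion Λ A) :
    ∃ Δ : Λ, Δ ≠ 0 ∧ ∀ a : A, Δ • a = 0 := by
  obtain ⟨n, s, hs⟩ := Module.Finite.exists_fin (R := Λ) (M := A)
  choose r hr using fun i => @htors (s i)
  refine ⟨∏ i, (r i : Λ), ?_, ?_⟩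
  · apply Finset.prod_ne_zero_iff.2
    intro i _
    exact nonZeroDivisors.coe_ne_zero (r i)
  · intro a
    have ha : a ∈ Submodule.span Λ (Set.range s) := by rw [hs]; trivial
    induction ha using Submodule.span_induction with
    | mem x hx =>
      obtain ⟨i, rfl⟩ := hx
      obtain ⟨c, hc⟩ := Finset.dvd_prod_of_mem (fun i => (r i : Λ)) (Finset.mem_univ i)
      rw [hc, mul_comm, mul_smul]
      have : (r i : Λ) • s i = 0 := hr i
      rw [this, smul_zero]
    | zero => rw [smul_zero]
    | add x y _ _ hx hy => rw [smul_add, hx, hy, add_zero]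
    | smul c x _ hx => rw [smul_comm, hx, smul_zero]

lemma strip_X : ∀ (k : ℕ) (P : Polynomial ℚ), P.natDegree = k → P ≠ 0 →
    (∀ a : A, (Polynomial.toLaurent P : Λ) • a = 0) →
    ∃ q : Polynomial ℚ, q ≠ 0 ∧ q.coeff 0 ≠ 0 ∧ ∀ a : A, (Polynomial.toLaurent q : Λ) • a = 0 := by
  intro k
  induction k using Nat.strong_induction_on with
  | _ k ih =>
    intro P hk hP hann
    by_cases h0 : P.coeff 0 = 0
    · obtain ⟨Q, hQ⟩ := Polynomial.X_dvd_iff.2 h0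
      have hQ0 : Q ≠ 0 := by rintro rfl; simp at hQ; exact hP hQ
      have hdeg : Q.natDegree < k := by
        have : P.natDegree = 1 + Q.natDegree := by
          rw [hQ, Polynomial.natDegree_mul Polynomial.X_ne_zero hQ0, Polynomial.natDegree_X]
        omega
      refine ih Q.natDegree hdeg Q rfl hQ0 ?_
      intro a
      have h1 : (Polynomial.toLaurent P : Λ) = T 1 * Polynomial.toLaurent Q := by
        rw [hQ, map_mul, Polynomial.toLaurent_X]
      have h2 := hann a
      rw [h1] at h2
      have h3 : (T (-1) : Λ) • ((T 1 * Polynomial.toLaurent Q : Λ) • a) = 0 := by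
        rw [h2, smul_zero]
      rw [← mul_smul, ← mul_assoc, ← T_add] at h3
      simpa using h3
    · exact ⟨P, hP, h0, hann⟩

lemma exists_poly_ann [Module.Finite Λ A] (htors : Module.IsTorsion Λ A) :
    ∃ p : Polynomial ℚ, p.Monic ∧ p.coeff 0 ≠ 0 ∧ ∀ a : A, (Polynomial.toLaurent p : Λ) • a = 0 := by
  obtain ⟨Δ, hΔ0, hΔ⟩ := exists_ann A htors
  obtain ⟨n, P, hP⟩ := exists_T_pow Δ
  have hP0 : P ≠ 0 := by
    intro h
    rw [h, map_zero] at hP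
    exact (mul_ne_zero hΔ0 ((isUnit_T (R := ℚ) n).ne_zero)) hP.symm
  have hPann : ∀ a : A, (Polynomial.toLaurent P : Λ) • a = 0 := by
    intro a
    rw [hP, mul_comm, mul_smul, hΔ a, smul_zero]
  obtain ⟨q, hq0, hqc, hqann⟩ := strip_X A P.natDegree P rfl hP0 hPann
  refine ⟨q * Polynomial.C (q.leadingCoeff)⁻¹, Polynomial.monic_mul_leadingCoeff_inv hq0, ?_, ?_⟩
  · rw [Polynomial.coeff_mul_C]
    exact mul_ne_zero hqc (inv_ne_zero (mt Polynomial.leadingCoeff_eq_zero.mp hq0))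
  · intro a
    rw [map_mul, mul_comm, mul_smul, hqann a, smul_zero]

end Ann

lemma fdA (A : Type) [AddCommGroup A] [Module Λ A] [Module.Finite Λ A]
    {p : Polynomial ℚ} (hm : p.Monic) (hc : p.coeff 0 ≠ 0)
    (hann : ∀ a : A, (Polynomial.toLaurent p : Λ) • a = 0)
    [Module ℚ A] [IsScalarTower ℚ Λ A] : FiniteDimensional ℚ A := by
  set I : Ideal Λ := Ideal.span {(Polynomial.toLaurent p : Λ)} with hI
  have hM : Module.IsTorsionBySet Λ A I :=
    (Module.isTorsionBySet_span_singleton_iff _).mpr hann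
  letI : Module (Λ ⧸ I) A := hM.module
  haveI : IsScalarTower Λ (Λ ⧸ I) A := hM.isScalarTower (S := Λ)
  haveI : IsScalarTower ℚ (Λ ⧸ I) A := hM.isScalarTower (S := ℚ)
  haveI : Module.Finite (Λ ⧸ I) A := Module.Finite.of_restrictScalars_finite Λ _ _
  haveI : FiniteDimensional ℚ (Λ ⧸ I) := fdBq hm hc
  exact Module.Finite.trans (Λ ⧸ I) A

lemma lbar_rat (q : ℚ) : lbar (algebraMap ℚ Λ q) = algebraMap ℚ Λ q :=
  (invert : Λ ≃ₐ[ℚ] Λ).commutes q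

lemma main_aux (A : Type) [AddCommGroup A] [Module Λ A] [Module ℚ A] [IsScalarTower ℚ Λ A]
    [FiniteDimensional ℚ A] {p : Polynomial ℚ} (hm : p.Monic) (hc : p.coeff 0 ≠ 0)
    (hann : ∀ a : A, (Polynomial.toLaurent p : Λ) • a = 0)
    (φ : HermForm A) (F : Submodule Λ A) (hinf : F ⊓ perp φ F = ⊥) :
    F ⊔ perp φ F = ⊤ := by
  have htor : ∀ x y : A, (Polynomial.toLaurent p : Λ) • φ.bil x y = 0 := by
    intro x y
    rw [← φ.smul_left, hann x, φ.bil_zero_left']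
  have hqsmul : ∀ (q : ℚ) (a : A), (algebraMap ℚ Λ q) • a = q • a := fun q a =>
    algebraMap_smul Λ q a
  set F' : Submodule ℚ A := F.restrictScalars ℚ with hF'
  set G' : Submodule ℚ A := (perp φ F).restrictScalars ℚ with hG'
  set g : A →ₗ[ℚ] (F' →ₗ[ℚ] ℚ) :=
    { toFun := fun y =>
        { toFun := fun x => ellQ hm hc (φ.bil x.1 y)
          map_add' := by
            intro x₁ x₂
            show ellQ hm hc (φ.bil (x₁.1 + x₂.1) y) = _
            rw [φ.add_left, ellQ_add hm hc (htor _ _) (htor _ _)]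
          map_smul' := by
            intro q x
            show ellQ hm hc (φ.bil (q • x.1) y) = q * ellQ hm hc (φ.bil x.1 y)
            rw [← hqsmul q x.1, φ.smul_left, ellQ_ratsmul hm hc q (htor _ _)] }
      map_add' := by
        intro y z
        apply LinearMap.ext
        intro x
        show ellQ hm hc (φ.bil x.1 (y + z)) = _
        rw [φ.add_right, ellQ_add hm hc (htor _ _) (htor _ _)]
        rfl
      map_smul' := by
        intro q y
        apply LinearMap.ext
        intro x
        show ellQ hm hc (φ.bil x.1 (q • y)) = q * ellQ hm hc (φ.bil x.1 y)
        rw [← hqsmul q y, φ.smul_right, lbar_rat, ellQ_ratsmul hm hc q (htor _ _)] }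
    with hg
  have hker : LinearMap.ker g = G' := by
    ext y
    rw [LinearMap.mem_ker]
    constructor
    · intro h
      show y ∈ perp φ F
      intro x hx
      by_contra h0
      obtain ⟨rr, hrr⟩ := ellQ_sep hm hc (htor x y) h0
      apply hrr
      rw [← φ.smul_left]
      have : ellQ hm hc (φ.bil (rr • x) y) = g y ⟨rr • x, F.smul_mem rr hx⟩ := rfl
      rw [this, h]
      rfl
    · intro h
      apply LinearMap.ext
      intro x
      have hx : φ.bil x.1 y = 0 := h x.1 x.2
      show ellQ hm hc (φ.bil x.1 y) = 0
      rw [hx]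
      rw [ellQ_eq hm hc (show nu (Polynomial.toLaurent p) (0 : Λ) = (0 : QL) from map_zero _)]
      rw [map_zero, map_zero, map_zero]
  have hrank := LinearMap.finrank_range_add_finrank_ker g
  have h2 : Module.finrank ℚ (LinearMap.range g) ≤ Module.finrank ℚ F' := by
    calc Module.finrank ℚ (LinearMap.range g) ≤ Module.finrank ℚ (F' →ₗ[ℚ] ℚ) :=
          (LinearMap.range g).finrank_le
      _ = Module.finrank ℚ F' := Subspace.dual_finrank_eq
  have hdisj : F' ⊓ G' = ⊥ := by
    rw [eq_bot_iff]
    intro x hx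
    have : x ∈ F ⊓ perp φ F := ⟨hx.1, hx.2⟩
    rw [hinf] at this
    exact this
  have hsup := Submodule.finrank_sup_add_finrank_inf_eq F' G'
  rw [hdisj, finrank_bot, add_zero] at hsup
  have htop : F' ⊔ G' = ⊤ := by
    apply Submodule.eq_top_of_finrank_eq
    have hle : Module.finrank ℚ (F' ⊔ G' : Submodule ℚ A) ≤ Module.finrank ℚ A :=
      (F' ⊔ G').finrank_le
    have hge : Module.finrank ℚ A ≤ Module.finrank ℚ (F' ⊔ G' : Submodule ℚ A) := by
      rw [hsup, ← hker, ← hrank]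
      omega
    omega
  rw [← Submodule.restrictScalars_eq_top_iff (S := ℚ)]
  rw [eq_top_iff, ← htop]
  apply sup_le
  · intro x hx
    exact Submodule.mem_sup_left hx
  · intro x hx
    exact Submodule.mem_sup_right hx

/-- `A = F ⊕ F^⊥` if and only if `F ∩ F^⊥ = 0`. -/
theorem stmt_7 (A : Type) [AddCommGroup A] [Module Λ A] [Module.Finite Λ A]
    (htors : Module.IsTorsion Λ A)
    (φ : HermForm A) (hnd : φ.Nondeg) (F : Submodule Λ A) :
    (F ⊔ perp φ F = ⊤ ∧ F ⊓ perp φ F = ⊥) ↔ F ⊓ perp φ F = ⊥ := by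
  constructor
  · exact fun h => h.2
  · intro hinf
    obtain ⟨p, hm, hc, hann⟩ := exists_poly_ann A htors
    letI : Module ℚ A := Module.compHom A (algebraMap ℚ Λ : ℚ →+* Λ)
    haveI : IsScalarTower ℚ Λ A := ⟨fun x y z => by
      rw [← algebraMap_smul Λ x y, smul_eq_mul, mul_smul]; rfl⟩
    haveI : FiniteDimensional ℚ A := fdA A hm hc hann
    exact ⟨main_aux A hm hc hann φ F hinf, hinf⟩
end
end

section
/- Let δ ∈ Λ be nonzero with δ(t⁻¹) ≐ δ(t) and δ(1) ≠ 0. Then for every nonzero complex number α, the multiplicities of α and of α⁻¹ as roots of δ are equal; 1 is not a root of δ; and δ has odd degree if and only if −1 is a root of δ of odd multiplicity (equivalently, the largest k with (1+t)^k dividing δ in Λ is odd). -/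
open LaurentPolynomial

set_option maxHeartbeats 1000000
set_option synthInstance.maxHeartbeats 400000

noncomputable section

namespace Aux
open Polynomial

lemma lbar_apply (x : Λ) : lbar x = invert x := rfl

lemma evalL_T (q : ℚˣ) (n : ℤ) : evalL q (T n) = (q : ℚ) ^ n := by
  have h : (T n : Λ) = AddMonoidAlgebra.single n (1:ℚ) := rfl
  rw [evalL, h, AddMonoidAlgebra.lift_single]
  simp

lemma evalL_toLaurent (q : ℚˣ) (f : ℚ[X]) :
    evalL q (Polynomial.toLaurent f) = f.eval (q : ℚ) := by
  have h : (evalL q).comp Polynomial.toLaurentAlg = Polynomial.aeval (q : ℚ) := by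
    apply Polynomial.algHom_ext
    rw [AlgHom.comp_apply, Polynomial.toLaurentAlg_apply, Polynomial.toLaurent_X,
      Polynomial.aeval_X]
    simpa using evalL_T q 1
  have h2 := DFunLike.congr_fun h f
  rw [AlgHom.comp_apply, Polynomial.toLaurentAlg_apply] at h2
  rw [h2, Polynomial.aeval_def, ← Polynomial.eval_map]
  simp

variable {K : Type*} [Field K]

lemma reverse_one' : (1 : K[X]).reverse = 1 := by
  simp [Polynomial.reverse, Polynomial.reflect_one]

lemma reverse_pow (p : K[X]) (n : ℕ) : (p ^ n).reverse = p.reverse ^ n := by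
  induction n with
  | zero => simpa using reverse_one'
  | succ n ih => rw [pow_succ, pow_succ, Polynomial.reverse_mul_of_domain, ih]

lemma reverse_X_add_one : (X + 1 : K[X]).reverse = X + 1 := by
  have h1 : ((X : K[X]) + 1).natDegree = 1 := by
    simpa using Polynomial.natDegree_X_add_C (1 : K)
  rw [Polynomial.reverse, h1, Polynomial.reflect_add, Polynomial.reflect_one_X,
    Polynomial.reflect_one]
  ring

lemma reverse_X_sub_C (a : K) :
    (X - Polynomial.C a).reverse = 1 - Polynomial.C a * X := by
  rw [Polynomial.reverse, Polynomial.natDegree_X_sub_C, Polynomial.reflect_sub,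
    Polynomial.reflect_one_X, Polynomial.reflect_C, pow_one]

lemma fac_X_sub_C (a : K) (ha : a ≠ 0) :
    (1 : K[X]) - Polynomial.C a * X = (-Polynomial.C a) * (X - Polynomial.C a⁻¹) := by
  have hC : Polynomial.C a * Polynomial.C a⁻¹ = (1 : K[X]) := by
    rw [← Polynomial.C_mul, mul_inv_cancel₀ ha, Polynomial.C_1]
  linear_combination -hC

lemma eval_reverse_mul (p : K[X]) (x : K) (hx : x ≠ 0) :
    p.reverse.eval x⁻¹ * x ^ p.natDegree = p.eval x := by
  letI : Invertible x := invertibleOfNonzero hx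
  have h := Polynomial.eval₂_reverse_mul_pow (RingHom.id K) x p
  rw [invOf_eq_inv x] at h
  exact h

lemma rm_le (g : K[X]) (hg : g ≠ 0) (hrev : g.reverse = g) (α : K) (hα : α ≠ 0) :
    g.rootMultiplicity α ≤ g.rootMultiplicity α⁻¹ := by
  set m := g.rootMultiplicity α with hm
  obtain ⟨q, hq⟩ := Polynomial.pow_rootMultiplicity_dvd g α
  rw [Polynomial.le_rootMultiplicity_iff hg]
  refine ⟨(-Polynomial.C α) ^ m * q.reverse, ?_⟩
  conv_lhs => rw [← hrev, hq]
  rw [Polynomial.reverse_mul_of_domain, reverse_pow, reverse_X_sub_C α, fac_X_sub_C α hα,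
    mul_pow]
  ring

lemma rm_eq (g : K[X]) (hg : g ≠ 0) (hrev : g.reverse = g) (α : K) (hα : α ≠ 0) :
    g.rootMultiplicity α = g.rootMultiplicity α⁻¹ := by
  refine le_antisymm (rm_le g hg hrev α hα) ?_
  have := rm_le g hg hrev α⁻¹ (inv_ne_zero hα)
  rwa [inv_inv] at this

lemma key [CharZero K] (g h : K[X]) (m : ℕ) (hgh : g = (X + 1) ^ m * h)
    (hrev : g.reverse = g) (hh : h.eval (-1) ≠ 0) (hg1 : g.eval 1 ≠ 0) :
    (Odd g.natDegree ↔ Odd m) := by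
  have hX1 : ((X : K[X]) + 1) ≠ 0 := by
    intro h0
    have := congrArg (Polynomial.eval 1) h0
    norm_num at this
  have hpow : ((X : K[X]) + 1) ^ m ≠ 0 := pow_ne_zero _ hX1
  have hhne : h ≠ 0 := fun h0 => hh (by simp [h0])
  have hrevh : h.reverse = h := by
    have h2 := hrev
    conv_lhs at h2 => rw [hgh]
    rw [Polynomial.reverse_mul_of_domain, reverse_pow, reverse_X_add_one, hgh] at h2
    exact mul_left_cancel₀ hpow h2
  have hEven : Even h.natDegree := by
    by_contra hodd
    rw [Nat.not_even_iff_odd] at hodd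
    have hev := eval_reverse_mul h (-1 : K) (by norm_num)
    rw [hrevh, hodd.neg_one_pow] at hev
    rw [show ((-1 : K)⁻¹) = -1 by norm_num] at hev
    apply hh
    have : h.eval (-1) + h.eval (-1) = 0 := by linear_combination -hev
    exact add_self_eq_zero.mp this
  have hnd : g.natDegree = m + h.natDegree := by
    rw [hgh, Polynomial.natDegree_mul hpow hhne, Polynomial.natDegree_pow]
    have hd1 : ((X : K[X]) + 1).natDegree = 1 := by
      simpa using Polynomial.natDegree_X_add_C (1 : K)
    rw [hd1, mul_one]
  have h2 : h.natDegree % 2 = 0 := Nat.even_iff.mp hEven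
  rw [hnd, Nat.odd_iff, Nat.odd_iff]
  omega

lemma reverse_map_CC (f : ℚ[X]) :
    (f.map (algebraMap ℚ ℂ)).reverse = f.reverse.map (algebraMap ℚ ℂ) := by
  rw [Polynomial.reverse, Polynomial.reverse,
    Polynomial.natDegree_map_eq_of_injective (algebraMap ℚ ℂ).injective,
    Polynomial.reflect_map]

lemma tl1 : Polynomial.toLaurent ((X : ℚ[X]) + 1) = 1 + tΛ := by
  rw [map_add, Polynomial.toLaurent_X, map_one, tΛ, add_comm]

lemma dvd_iff (f : ℚ[X]) (k : ℤ) (j : ℕ) :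
    (1 + tΛ) ^ j ∣ (T k * Polynomial.toLaurent f) ↔ ((X : ℚ[X]) + 1) ^ j ∣ f := by
  constructor
  · rintro ⟨Q, hQ⟩
    obtain ⟨n, Q', hQ'⟩ := exists_T_pow Q
    have h2 : Polynomial.toLaurent (((X : ℚ[X]) + 1) ^ j * Q') =
        Polynomial.toLaurent f * T (k + n) := by
      rw [map_mul, map_pow, tl1, hQ']
      calc (1 + tΛ) ^ j * (Q * T n) = ((1 + tΛ) ^ j * Q) * T n := by ring
        _ = (T k * Polynomial.toLaurent f) * T n := by rw [← hQ]
        _ = Polynomial.toLaurent f * T (k + n) := by rw [T_add]; ring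
    rcases le_or_gt 0 (k + n) with hs | hs
    · have h3 : Polynomial.toLaurent (((X : ℚ[X]) + 1) ^ j * Q') =
          Polynomial.toLaurent (f * X ^ (k + n).toNat) := by
        rw [h2, map_mul, Polynomial.toLaurent_X_pow, Int.toNat_of_nonneg hs]
      have h4 := Polynomial.toLaurent_injective h3
      have hcop : IsCoprime (((X : ℚ[X]) + 1) ^ j) ((X : ℚ[X]) ^ (k + n).toNat) := by
        apply IsCoprime.pow
        exact ⟨1, -1, by ring⟩
      exact hcop.dvd_of_dvd_mul_right ⟨Q', by rw [← h4]⟩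
    · have h3 : Polynomial.toLaurent f =
          Polynomial.toLaurent (((X : ℚ[X]) + 1) ^ j * Q' * X ^ (-(k + n)).toNat) := by
        rw [map_mul, Polynomial.toLaurent_X_pow,
          Int.toNat_of_nonneg (by omega : (0:ℤ) ≤ -(k + n)), h2, mul_T_assoc, add_neg_cancel,
          T_zero, mul_one]
      have h4 := Polynomial.toLaurent_injective h3
      exact ⟨Q' * X ^ (-(k + n)).toNat, by rw [h4]; ring⟩
  · rintro ⟨q, hq⟩
    refine ⟨T k * Polynomial.toLaurent q, ?_⟩
    rw [hq, map_mul, map_pow, tl1]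
    ring

lemma rev_eq (f : ℚ[X]) (k : ℤ) (hf0 : f.coeff 0 ≠ 0)
    (hsa : Associated (lbar (T k * Polynomial.toLaurent f)) (T k * Polynomial.toLaurent f))
    (h1 : f.eval 1 ≠ 0) : f.reverse = f := by
  have hfne : f ≠ 0 := fun h0 => hf0 (by simp [h0])
  have hrne : f.reverse ≠ 0 := fun h0 => hfne (Polynomial.reverse_eq_zero.mp h0)
  have hnt0 : f.natTrailingDegree = 0 := Polynomial.natTrailingDegree_eq_zero.mpr (Or.inr hf0)
  have h4 : Polynomial.toLaurent f.reverse * T (-(f.natDegree : ℤ)) =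
      invert (Polynomial.toLaurent f) := by
    rw [LaurentPolynomial.toLaurent_reverse, mul_T_assoc, add_neg_cancel, T_zero, mul_one]
  have hlbar : lbar (T k * Polynomial.toLaurent f) =
      Polynomial.toLaurent f.reverse * T (-(f.natDegree : ℤ) - k) := by
    rw [lbar_apply, map_mul, invert_T, ← h4,
      show (-(f.natDegree : ℤ) - k) = (-(f.natDegree : ℤ)) + -k by ring, ← mul_T_assoc]
    ring
  have hassoc : Associated (Polynomial.toLaurent f.reverse) (Polynomial.toLaurent f) := by
    have a1 : Associated (Polynomial.toLaurent f.reverse)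
        (lbar (T k * Polynomial.toLaurent f)) := by
      rw [hlbar]
      exact ⟨(isUnit_T (-(f.natDegree : ℤ) - k)).unit, by rw [IsUnit.unit_spec]⟩
    have a2 : Associated (T k * Polynomial.toLaurent f) (Polynomial.toLaurent f) :=
      Associated.symm ⟨(isUnit_T k).unit, by rw [IsUnit.unit_spec]; ring⟩
    exact (a1.trans hsa).trans a2
  obtain ⟨u, hu⟩ := hassoc
  obtain ⟨nu, u', hu'⟩ := exists_T_pow (u : Λ)
  have hu'ne : u' ≠ 0 := by
    intro h0
    have h5 : (u : Λ) * T nu = 0 := by rw [← hu', h0, map_zero]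
    exact ((u.isUnit.mul (isUnit_T (nu : ℤ))).ne_zero) h5
  have heq : f.reverse * u' = f * X ^ nu := by
    apply Polynomial.toLaurent_injective
    rw [map_mul, map_mul, hu', Polynomial.toLaurent_X_pow, ← mul_assoc, hu]
  have htd : f.reverse.natTrailingDegree + u'.natTrailingDegree =
      f.natTrailingDegree + ((X : ℚ[X]) ^ nu).natTrailingDegree := by
    rw [← Polynomial.natTrailingDegree_mul hrne hu'ne, heq,
      Polynomial.natTrailingDegree_mul hfne (pow_ne_zero _ Polynomial.X_ne_zero)]
  rw [Polynomial.natTrailingDegree_reverse, Polynomial.natTrailingDegree_X_pow, hnt0,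
    zero_add, zero_add] at htd
  have hr : u'.rootMultiplicity 0 = nu := by
    rw [Polynomial.rootMultiplicity_eq_natTrailingDegree', htd]
  have hwe' := Polynomial.eval_divByMonic_pow_rootMultiplicity_ne_zero 0 hu'ne
  have hdec := Polynomial.pow_mul_divByMonic_rootMultiplicity_eq u' 0
  set w := u' /ₘ ((X : ℚ[X]) - Polynomial.C 0) ^ (u'.rootMultiplicity 0) with hwdef
  have hwne : w ≠ 0 := fun h0 => hwe' (by rw [h0, Polynomial.eval_zero])
  rw [Polynomial.C_0, sub_zero] at hdec
  rw [hr] at hdec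
  have heq2 : (f.reverse * w) * X ^ nu = f * X ^ nu := by rw [← heq, ← hdec]; ring
  have hw : f.reverse * w = f := mul_right_cancel₀ (pow_ne_zero _ Polynomial.X_ne_zero) heq2
  have hnw : w.natDegree = 0 := by
    have h7 := congrArg Polynomial.natDegree hw
    rw [Polynomial.natDegree_mul hrne hwne, Polynomial.reverse_natDegree, hnt0,
      Nat.sub_zero] at h7
    omega
  obtain ⟨c, hc⟩ := Polynomial.natDegree_eq_zero.mp hnw
  have hrev1 : f.reverse.eval 1 = f.eval 1 := by
    have h8 := eval_reverse_mul f 1 one_ne_zero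
    simpa using h8
  have he : f.eval 1 * c = f.eval 1 := by
    have h9 := congrArg (Polynomial.eval 1) hw
    rw [Polynomial.eval_mul, hrev1, ← hc] at h9
    simpa using h9
  have hc1 : c = 1 := mul_left_cancel₀ h1 (he.trans (mul_one (f.eval 1)).symm)
  have hw1 : w = 1 := by rw [← hc, hc1, Polynomial.C_1]
  calc f.reverse = f.reverse * w := by rw [hw1, mul_one]
    _ = f := hw

end Aux


/-- roots of symmetric annihilators come in pairs `(α, α⁻¹)`;
`1` is not a root; odd degree corresponds to odd multiplicity of the root `-1`. -/
theorem stmt_9 (δ : Λ) (hδ : δ ≠ 0)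
    (hsa : Associated (lbar δ) δ) (h1 : evalL 1 δ ≠ 0) :
    ∀ (f : Polynomial ℚ) (k : ℤ),
      δ = T k * Polynomial.toLaurent f → f.coeff 0 ≠ 0 →
      ((∀ α : ℂ, α ≠ 0 →
          (f.map (algebraMap ℚ ℂ)).rootMultiplicity α =
            (f.map (algebraMap ℚ ℂ)).rootMultiplicity α⁻¹) ∧
        f.eval 1 ≠ 0 ∧
        (Odd f.natDegree ↔ Odd ((f.map (algebraMap ℚ ℂ)).rootMultiplicity (-1))) ∧
        (∀ kk : ℕ, (1 + tΛ) ^ kk ∣ δ → ¬ (1 + tΛ) ^ (kk + 1) ∣ δ →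
          (Odd f.natDegree ↔ Odd kk))) := by
  intro f k hδf hf0
  have hfne : f ≠ 0 := fun h0 => hf0 (by simp [h0])
  have heval1 : f.eval 1 ≠ 0 := by
    intro h0
    apply h1
    rw [hδf, map_mul, Aux.evalL_toLaurent, Aux.evalL_T]
    simp [h0]
  have hrevf : f.reverse = f := Aux.rev_eq f k hf0 (hδf ▸ hsa) heval1
  set g : Polynomial ℂ := f.map (algebraMap ℚ ℂ) with hg
  have hgne : g ≠ 0 := by
    rw [hg, Ne, Polynomial.map_eq_zero_iff (algebraMap ℚ ℂ).injective]
    exact hfne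
  have hgrev : g.reverse = g := by rw [hg, Aux.reverse_map_CC, hrevf]
  have hgdeg : g.natDegree = f.natDegree :=
    Polynomial.natDegree_map_eq_of_injective (algebraMap ℚ ℂ).injective f
  have hg1 : g.eval 1 ≠ 0 := by
    rw [hg, Polynomial.eval_map, Polynomial.eval₂_at_one]
    simpa using heval1
  refine ⟨fun α hα => Aux.rm_eq g hgne hgrev α hα, heval1, ?_, ?_⟩
  · set m := g.rootMultiplicity (-1) with hm
    have hdec := Polynomial.pow_mul_divByMonic_rootMultiplicity_eq g (-1)
    set hP := g /ₘ ((Polynomial.X : Polynomial ℂ) - Polynomial.C (-1)) ^ m with hhdef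
    have hh : hP.eval (-1) ≠ 0 :=
      Polynomial.eval_divByMonic_pow_rootMultiplicity_ne_zero (-1) hgne
    have hxc : ((Polynomial.X : Polynomial ℂ) - Polynomial.C (-1)) = Polynomial.X + 1 := by
      rw [map_neg, map_one, sub_neg_eq_add]
    have hk := Aux.key g hP m (by rw [← hdec, hxc]) hgrev hh hg1
    rw [← hgdeg]
    exact hk
  · intro kk hdvd hndvd
    rw [hδf] at hdvd hndvd
    have h5 : ((Polynomial.X : Polynomial ℚ) + 1) ^ kk ∣ f := (Aux.dvd_iff f k kk).mp hdvd
    have h6 : ¬ ((Polynomial.X : Polynomial ℚ) + 1) ^ (kk + 1) ∣ f :=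
      fun hd => hndvd ((Aux.dvd_iff f k (kk + 1)).mpr hd)
    have hxcq : ((Polynomial.X : Polynomial ℚ) - Polynomial.C (-1)) = Polynomial.X + 1 := by
      rw [map_neg, map_one, sub_neg_eq_add]
    have hle : kk ≤ f.rootMultiplicity (-1) :=
      (Polynomial.le_rootMultiplicity_iff hfne).mpr (by rw [hxcq]; exact h5)
    have hge : f.rootMultiplicity (-1) ≤ kk :=
      (Polynomial.rootMultiplicity_le_iff hfne _ _).mpr (by rw [hxcq]; exact h6)
    have hkk : kk = f.rootMultiplicity (-1) := le_antisymm hle hge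
    have hdecq := Polynomial.pow_mul_divByMonic_rootMultiplicity_eq f (-1)
    set hQ := f /ₘ ((Polynomial.X : Polynomial ℚ) - Polynomial.C (-1)) ^
      (f.rootMultiplicity (-1)) with hqdef
    have hhq : hQ.eval (-1) ≠ 0 :=
      Polynomial.eval_divByMonic_pow_rootMultiplicity_ne_zero (-1) hfne
    have hk2 := Aux.key f hQ (f.rootMultiplicity (-1)) (by conv_lhs => rw [← hdecq, hxcq]) hrevf hhq heval1
    rw [hkk]
    exact hk2
end
end
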